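/- A ring R is S-coherent (every finitely generated ideal of R is S-finitely presented) if and only if for every finitely generated ideal I of R and every a ∈ R, the quotient ideal (I : a) = {x ∈ R : xa ∈ I} is an S-finite ideal of R. -/

import Mathlib

def IsSFinite {R : Type*} [CommRing R] (S : Submonoid R) (M : Type*) [AddCommGroup M]
    [Module R M] : Prop :=
  ∃ s ∈ S, ∃ N : Submodule R M, N.FG ∧ ∀ m : M, s • m ∈ N

def IsSFinitelyPresented {R : Type*} [CommRing R] (S : Submonoid R) (M : Type*)
    [AddCommGroup M] [Module R M] : Prop :=
  ∃ (n : ℕ) (f : (Fin n → R) →ₗ[R] M), Function.Surjective f ∧ IsSFinite S (LinearMap.ker f)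

/-- An ideal `I` is `S`-finite: `s • I ⊆ J ⊆ I` for some finitely generated ideal `J`, `s ∈ S`. -/
def IsSFiniteIdeal {R : Type*} [CommRing R] (S : Submonoid R) (I : Ideal R) : Prop :=
  ∃ s ∈ S, ∃ J : Ideal R, J.FG ∧ J ≤ I ∧ ∀ x ∈ I, s * x ∈ J

/-- `R` is `S`-coherent if every finitely generated ideal is `S`-finitely presented. -/
def IsSCoherentRing (R : Type*) [CommRing R] (S : Submonoid R) : Prop :=
  ∀ I : Ideal R, I.FG → IsSFinitelyPresented S ↥I

section Aux

variable {R : Type*} [CommRing R] {S : Submonoid R}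

lemma aux_isSFinite_of_finite (M : Type*) [AddCommGroup M] [Module R M] [Module.Finite R M] :
    IsSFinite S M :=
  ⟨1, S.one_mem, ⊤, Module.Finite.fg_top, fun _ => Submodule.mem_top⟩

lemma aux_surj {M N : Type*} [AddCommGroup M] [Module R M] [AddCommGroup N] [Module R N]
    (f : M →ₗ[R] N) (hf : Function.Surjective f) (h : IsSFinite S M) : IsSFinite S N := by
  obtain ⟨s, hs, P, hPfg, hP⟩ := h
  refine ⟨s, hs, P.map f, hPfg.map f, fun n => ?_⟩
  obtain ⟨m, rfl⟩ := hf n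
  rw [← map_smul]
  exact Submodule.mem_map_of_mem (hP m)

/-- Extensions of S-finite modules are S-finite. -/
lemma aux_ext {B C : Type*} [AddCommGroup B] [Module R B] [AddCommGroup C] [Module R C]
    (f : B →ₗ[R] C) (hf : Function.Surjective f)
    (hker : IsSFinite S (LinearMap.ker f)) (hC : IsSFinite S C) : IsSFinite S B := by
  obtain ⟨s, hs, Nc, hNcfg, hNc⟩ := hC
  obtain ⟨t, ht, Nk, hNkfg, hNk⟩ := hker
  obtain ⟨T, hT⟩ := hNcfg
  choose g hg using hf
  refine ⟨t * s, S.mul_mem ht hs,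
    Submodule.span R (g '' ↑T) ⊔ Submodule.map (LinearMap.ker f).subtype Nk,
    Submodule.FG.sup (Submodule.fg_span (T.finite_toSet.image g)) (hNkfg.map _), fun b => ?_⟩
  have h1 : f (s • b) ∈ Submodule.map f (Submodule.span R (g '' ↑T)) := by
    rw [Submodule.map_span, Set.image_image]
    simp only [hg, Set.image_id', hT]
    rw [map_smul]
    exact hNc (f b)
  obtain ⟨z, hz, hz2⟩ := h1
  have hmem : s • b - z ∈ LinearMap.ker f := by
    rw [LinearMap.mem_ker, map_sub, hz2, sub_self]
  have h2 : t • (s • b - z) ∈ Submodule.map (LinearMap.ker f).subtype Nk :=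
    ⟨t • (⟨s • b - z, hmem⟩ : LinearMap.ker f), hNk _, rfl⟩
  have key : (t * s) • b = t • z + t • (s • b - z) := by
    rw [smul_sub, mul_smul]; abel
  rw [key]
  exact Submodule.add_mem _
    (Submodule.mem_sup_left (Submodule.smul_mem _ _ hz))
    (Submodule.mem_sup_right h2)

/-- Schanuel-type transfer: if one presentation has S-finite kernel, so does another. -/
lemma aux_schanuel {F G M : Type*} [AddCommGroup F] [Module R F] [AddCommGroup G] [Module R G]
    [AddCommGroup M] [Module R M] [Module.Projective R F] [Module.Finite R G]
    (f : F →ₗ[R] M) (g : G →ₗ[R] M) (hf : Function.Surjective f) (hg : Function.Surjective g)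
    (h : IsSFinite S (LinearMap.ker f)) : IsSFinite S (LinearMap.ker g) := by
  set X : Submodule R (F × G) :=
    LinearMap.ker (f ∘ₗ LinearMap.fst R F G - g ∘ₗ LinearMap.snd R F G) with hX
  have hmemX : ∀ p : F × G, p ∈ X ↔ f p.1 = g p.2 := fun p => by
    simp [hX, LinearMap.mem_ker, sub_eq_zero]
  let πF : X →ₗ[R] F := (LinearMap.fst R F G) ∘ₗ X.subtype
  let πG : X →ₗ[R] G := (LinearMap.snd R F G) ∘ₗ X.subtype
  have hπF : Function.Surjective πF := fun x => by
    obtain ⟨y, hy⟩ := hg (f x)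
    exact ⟨⟨(x, y), (hmemX _).2 hy.symm⟩, rfl⟩
  have hπG : Function.Surjective πG := fun y => by
    obtain ⟨x, hx⟩ := hf (g y)
    exact ⟨⟨(x, y), (hmemX _).2 hx⟩, rfl⟩
  -- X is S-finite: extension of G by (a quotient of) ker f
  have hXfin : IsSFinite S X := by
    refine aux_ext πG hπG ?_ (aux_isSFinite_of_finite G)
    have hφmem : ∀ x : LinearMap.ker f, ((x : F), (0 : G)) ∈ X := fun x => by
      rw [hmemX]
      simp [x.2]
    let φ : LinearMap.ker f →ₗ[R] X :=
      LinearMap.codRestrict X ((LinearMap.inl R F G) ∘ₗ (LinearMap.ker f).subtype) hφmem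
    have hφker : ∀ x : LinearMap.ker f, φ x ∈ LinearMap.ker πG := fun x => by
      simp [φ, πG, LinearMap.mem_ker, LinearMap.codRestrict_apply]
      rfl
    refine aux_surj (LinearMap.codRestrict _ φ hφker) ?_ h
    rintro ⟨⟨⟨x, y⟩, hxy⟩, hq⟩
    have hy : y = 0 := hq
    have hx : f x = 0 := by
      have := (hmemX _).1 hxy
      simpa [hy] using this
    refine ⟨⟨x, hx⟩, ?_⟩
    apply Subtype.ext; apply Subtype.ext
    simp [φ, hy, LinearMap.codRestrict_apply]
    rfl
  -- ker g is a retract of X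
  obtain ⟨σ, hσ⟩ := Module.projective_lifting_property πF LinearMap.id hπF
  have hσ' : ∀ x : F, πF (σ x) = x := fun x => congrArg (· x) (congrArg DFunLike.coe hσ)
  let τ : X →ₗ[R] G := πG ∘ₗ (LinearMap.id - σ ∘ₗ πF)
  have hτ : ∀ p : X, τ p ∈ LinearMap.ker g := fun p => by
    have h1 : f (πF p) = g (πG p) := (hmemX _).1 p.2
    have h2 : f (πF (σ (πF p))) = g (πG (σ (πF p))) := (hmemX _).1 (σ (πF p)).2
    rw [LinearMap.mem_ker]
    simp only [τ, LinearMap.comp_apply, LinearMap.sub_apply, LinearMap.id_apply, map_sub]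
    rw [← h1, ← h2, hσ' (πF p), sub_self]
  refine aux_surj (LinearMap.codRestrict _ τ hτ) ?_ hXfin
  rintro ⟨y, hy⟩
  have hp : ((0 : F), y) ∈ X := by
    rw [hmemX]
    simp [LinearMap.mem_ker.1 hy]
  refine ⟨⟨(0, y), hp⟩, ?_⟩
  apply Subtype.ext
  have hπF0 : πF (⟨(0, y), hp⟩ : X) = 0 := rfl
  simp [τ, hπF0, πG]

lemma aux_ideal_to_module {I : Ideal R} (h : IsSFiniteIdeal S I) : IsSFinite S I := by
  obtain ⟨s, hs, J, hJfg, hJI, hJ⟩ := h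
  refine ⟨s, hs, Submodule.comap I.subtype J, ?_, fun m => ?_⟩
  · apply Submodule.fg_of_fg_map_injective I.subtype (Submodule.injective_subtype I)
    rw [Submodule.map_comap_subtype]
    rwa [inf_eq_right.2 hJI]
  · show ((s • m : I) : R) ∈ J
    have : ((s • m : I) : R) = s * (m : R) := rfl
    rw [this]
    exact hJ _ m.2

lemma aux_range_ideal {M : Type*} [AddCommGroup M] [Module R M] (ℓ : M →ₗ[R] R)
    (h : IsSFinite S M) : IsSFiniteIdeal S (LinearMap.range ℓ) := by
  obtain ⟨s, hs, N, hNfg, hN⟩ := h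
  refine ⟨s, hs, Submodule.map ℓ N, hNfg.map ℓ, ?_, ?_⟩
  · rintro _ ⟨m, _, rfl⟩
    exact LinearMap.mem_range_self ℓ m
  · rintro _ ⟨m, rfl⟩
    have : s * ℓ m = ℓ (s • m) := by rw [map_smul, smul_eq_mul]
    rw [this]
    exact Submodule.mem_map_of_mem (hN m)

/-- The range of the last-coordinate projection on the kernel of a linear combination map
is the colon ideal. -/
lemma aux_ker_proj {n : ℕ} (v : Fin (n + 1) → R) :
    LinearMap.range ((LinearMap.proj (Fin.last n) : (Fin (n + 1) → R) →ₗ[R] R) ∘ₗ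
        (LinearMap.ker (Fintype.linearCombination R v)).subtype) =
      (Ideal.span (Set.range (v ∘ Fin.castSucc))).colon (Ideal.span {v (Fin.last n)}) := by
  ext x
  rw [LinearMap.mem_range, Ideal.mem_colon_span_singleton]
  constructor
  · rintro ⟨⟨c, hc⟩, rfl⟩
    have hc' : ∑ i, c i • v i = 0 := hc
    rw [Fin.sum_univ_castSucc] at hc'
    have hsum : ∑ i : Fin n, c (Fin.castSucc i) • v (Fin.castSucc i) ∈
        Ideal.span (Set.range (v ∘ Fin.castSucc)) :=
      Submodule.sum_mem _ fun i _ =>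
        Submodule.smul_mem _ _ (Submodule.subset_span ⟨i, rfl⟩)
    have : (LinearMap.proj (Fin.last n) ∘ₗ
        (LinearMap.ker (Fintype.linearCombination R v)).subtype) ⟨c, hc⟩ = c (Fin.last n) := rfl
    rw [this]
    have heq : c (Fin.last n) • v (Fin.last n) =
        -(∑ i : Fin n, c (Fin.castSucc i) • v (Fin.castSucc i)) := by
      rw [eq_neg_iff_add_eq_zero, add_comm]
      exact hc'
    rw [← smul_eq_mul, heq]
    exact Submodule.neg_mem _ hsum
  · intro hx
    rw [← Ideal.submodule_span_eq, Submodule.mem_span_range_iff_exists_fun] at hx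
    obtain ⟨c, hcx⟩ := hx
    have hmem : Fin.snoc (fun j => -c j) x ∈ LinearMap.ker (Fintype.linearCombination R v) := by
      rw [LinearMap.mem_ker]
      show ∑ i, (Fin.snoc (fun j => -c j) x : Fin (n + 1) → R) i • v i = 0
      rw [Fin.sum_univ_castSucc]
      simp only [Fin.snoc_castSucc, Fin.snoc_last]
      have : ∑ i : Fin n, (-c i) • v (Fin.castSucc i) = -(x * v (Fin.last n)) := by
        rw [← hcx, ← Finset.sum_neg_distrib]
        exact Finset.sum_congr rfl fun i _ => by simp [Function.comp]
      rw [this, smul_eq_mul]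
      ring
    exact ⟨⟨_, hmem⟩, by simp [Fin.snoc_last]⟩

/-- Key induction: if all colon ideals of f.g. ideals are S-finite, then the kernel of any
finite linear combination map into `R` is S-finite. -/
lemma aux_ker_sfinite
    (hcolon : ∀ I : Ideal R, I.FG → ∀ a : R, IsSFiniteIdeal S (I.colon (Ideal.span {a}))) :
    ∀ n (v : Fin n → R), IsSFinite S (LinearMap.ker (Fintype.linearCombination R v)) := by
  intro n
  induction n with
  | zero =>
    intro v
    refine ⟨1, S.one_mem, ⊥, Submodule.fg_bot, fun m => ?_⟩
    have : m = 0 := Subsingleton.elim m 0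
    rw [this, smul_zero]
    exact Submodule.zero_mem _
  | succ n ih =>
    intro v
    set K := LinearMap.ker (Fintype.linearCombination R v) with hK
    let π : K →ₗ[R] R := (LinearMap.proj (Fin.last n)) ∘ₗ K.subtype
    have hrange : LinearMap.range π =
        (Ideal.span (Set.range (v ∘ Fin.castSucc))).colon (Ideal.span {v (Fin.last n)}) :=
      aux_ker_proj v
    have hC : IsSFinite S (LinearMap.range π) := by
      apply aux_ideal_to_module
      rw [hrange]
      exact hcolon _ (Submodule.fg_span (Set.finite_range _)) _
    refine aux_ext π.rangeRestrict π.surjective_rangeRestrict ?_ hC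
    rw [LinearMap.ker_rangeRestrict]
    -- build a surjection from ker of the truncated combination map
    let E : (Fin n → R) →ₗ[R] (Fin (n + 1) → R) :=
      LinearMap.pi (fun i => Fin.lastCases (motive := fun _ => (Fin n → R) →ₗ[R] R)
        0 (fun j => LinearMap.proj j) i)
    have hE2 : ∀ (c : Fin n → R) (j : Fin n), E c (Fin.castSucc j) = c j := fun c j => by
      show (Fin.lastCases (motive := fun _ => (Fin n → R) →ₗ[R] R)
        0 (fun j => LinearMap.proj j) (Fin.castSucc j)) c = c j
      rw [Fin.lastCases_castSucc]
      rfl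
    have hE1 : ∀ c : Fin n → R, E c (Fin.last n) = 0 := fun c => by
      show (Fin.lastCases (motive := fun _ => (Fin n → R) →ₗ[R] R)
        0 (fun j => LinearMap.proj j) (Fin.last n)) c = 0
      rw [Fin.lastCases_last]
      rfl
    have hmem : ∀ c : LinearMap.ker (Fintype.linearCombination R (v ∘ Fin.castSucc)),
        E (c : Fin n → R) ∈ K := fun c => by
      have hc : ∑ j, (c : Fin n → R) j • v (Fin.castSucc j) = 0 := c.2
      rw [hK, LinearMap.mem_ker]
      show ∑ i, E (c : Fin n → R) i • v i = 0
      rw [Fin.sum_univ_castSucc, hE1, zero_smul, add_zero]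
      calc ∑ j : Fin n, E (c : Fin n → R) (Fin.castSucc j) • v (Fin.castSucc j)
          = ∑ j : Fin n, (c : Fin n → R) j • v (Fin.castSucc j) :=
            Finset.sum_congr rfl fun j _ => by rw [hE2]
        _ = 0 := hc
    let φ0 : LinearMap.ker (Fintype.linearCombination R (v ∘ Fin.castSucc)) →ₗ[R] K :=
      LinearMap.codRestrict K
        (E ∘ₗ (LinearMap.ker (Fintype.linearCombination R (v ∘ Fin.castSucc))).subtype) hmem
    have hφ0ker : ∀ c, φ0 c ∈ LinearMap.ker π := fun c => by
      show E (c : Fin n → R) (Fin.last n) = 0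
      exact hE1 _
    refine aux_surj (LinearMap.codRestrict _ φ0 hφ0ker) ?_
      (ih (v ∘ Fin.castSucc))
    rintro ⟨⟨c, hcK⟩, hc0⟩
    have hlast : c (Fin.last n) = 0 := hc0
    have hcK' : ∑ i, c i • v i = 0 := hcK
    have hcmem : (c ∘ Fin.castSucc) ∈
        LinearMap.ker (Fintype.linearCombination R (v ∘ Fin.castSucc)) := by
      rw [LinearMap.mem_ker]
      show ∑ j, (c ∘ Fin.castSucc) j • (v ∘ Fin.castSucc) j = 0
      rw [Fin.sum_univ_castSucc, hlast, zero_smul, add_zero] at hcK'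
      exact hcK'
    refine ⟨⟨_, hcmem⟩, ?_⟩
    apply Subtype.ext; apply Subtype.ext
    funext i
    show E (c ∘ Fin.castSucc) i = c i
    refine Fin.lastCases ?_ ?_ i
    · rw [hE1, hlast]
    · intro j
      rw [hE2]
      rfl

end Aux

theorem scoherent_iff_colon_sfinite {R : Type*} [CommRing R] (S : Submonoid R) :
    IsSCoherentRing R S ↔
      ∀ I : Ideal R, I.FG → ∀ a : R, IsSFiniteIdeal S (I.colon (Ideal.span {a})) := by
  constructor
  · intro h I hI a
    -- consider J = I + (a)
    set J : Ideal R := I ⊔ Ideal.span {a} with hJdef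
    have hJfg : J.FG := Submodule.FG.sup hI (Submodule.fg_span_singleton a)
    obtain ⟨n, f, hf, hker⟩ := h J hJfg
    obtain ⟨m, w, hw⟩ := Submodule.fg_iff_exists_fin_generating_family.1 hI
    set v : Fin (m + 1) → R := Fin.snoc w a with hv
    have hrangev : Set.range v = insert a (Set.range w) := by
      ext x
      constructor
      · rintro ⟨i, rfl⟩
        refine Fin.lastCases ?_ ?_ i
        · left; rw [hv]; simp
        · intro j; right; exact ⟨j, by rw [hv]; simp⟩
      · rintro (rfl | ⟨j, rfl⟩)
        · exact ⟨Fin.last m, by rw [hv]; simp⟩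
        · exact ⟨Fin.castSucc j, by rw [hv]; simp⟩
    have hrange0 : LinearMap.range (Fintype.linearCombination R v) = J := by
      rw [Fintype.range_linearCombination, hrangev, Submodule.span_insert, hw, hJdef,
        Ideal.submodule_span_eq, sup_comm]
    let g : (Fin (m + 1) → R) →ₗ[R] J :=
      LinearMap.codRestrict J (Fintype.linearCombination R v)
        (fun c => hrange0 ▸ LinearMap.mem_range_self _ c)
    have hg : Function.Surjective g := by
      rintro ⟨x, hx⟩
      rw [← hrange0] at hx
      obtain ⟨c, hc⟩ := hx
      exact ⟨c, Subtype.ext hc⟩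
    have hkerg : IsSFinite S (LinearMap.ker g) := aux_schanuel f g hf hg hker
    rw [LinearMap.ker_codRestrict] at hkerg
    have hres := aux_range_ideal ((LinearMap.proj (Fin.last m) : (Fin (m + 1) → R) →ₗ[R] R) ∘ₗ
        (LinearMap.ker (Fintype.linearCombination R v)).subtype) hkerg
    rw [aux_ker_proj v] at hres
    have hvc : v ∘ Fin.castSucc = w := by
      funext j; rw [hv]; simp
    have hvl : v (Fin.last m) = a := by rw [hv]; simp
    rwa [hvc, hvl, Ideal.span, hw] at hres
  · intro hcolon I hI
    obtain ⟨n, v, hv⟩ := Submodule.fg_iff_exists_fin_generating_family.1 hI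
    have hrange0 : LinearMap.range (Fintype.linearCombination R v) = I := by
      rw [Fintype.range_linearCombination, hv]
    refine ⟨n, LinearMap.codRestrict I (Fintype.linearCombination R v)
      (fun c => hrange0 ▸ LinearMap.mem_range_self _ c), ?_, ?_⟩
    · rintro ⟨x, hx⟩
      rw [← hrange0] at hx
      obtain ⟨c, hc⟩ := hx
      exact ⟨c, Subtype.ext hc⟩
    · rw [LinearMap.ker_codRestrict]
      exact aux_ker_sfinite hcolon n v
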